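/- arXiv:2404.13832 — 4 statements merged into one kernel-verified Lean document; each statement's English description precedes it below -/
import Mathlib

section
/- For every compact set K ⊆ ℝ² there exists h₀ = h₀(K) > 0 such that for all h > h₀ and all p = (x,y) ∈ K, the symmetric 2×2 matrix [[a, b],[b, c]] with a = −m Σ_{i=1}^n d_i(p,h)^{−(m+2)} (1 − (m+2)(x − x_i)²/d_i(p,h)²), b = m(m+2) Σ_{i=1}^n (x − x_i)(y − y_i)/d_i(p,h)^{m+4}, c = −m Σ_{i=1}^n d_i(p,h)^{−(m+2)} (1 − (m+2)(y − y_i)²/d_i(p,h)²) — that is, the Hessian matrix of f(·,h) at p — is negative definite. -/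
open Real Finset

/-- Distance from `q ∈ ℝ²` (at height `h`) to the point `(xi, yi)` in the base plane. -/
noncomputable def distPt (xi yi h : ℝ) (q : ℝ × ℝ) : ℝ :=
  Real.sqrt ((q.1 - xi) ^ 2 + (q.2 - yi) ^ 2 + h ^ 2)

/-- The objective functional `f(q, h) = ∑ i, d_i(q,h)^(-m)`. -/
noncomputable def fEnergy {N : ℕ} (X Y : Fin N → ℝ) (m h : ℝ) (q : ℝ × ℝ) : ℝ :=
  ∑ i, distPt (X i) (Y i) h q ^ (-m)

/-- First component of the gradient `F = ∇f`. -/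
noncomputable def F1 {N : ℕ} (X Y : Fin N → ℝ) (m h : ℝ) (q : ℝ × ℝ) : ℝ :=
  -m * ∑ i, (q.1 - X i) / distPt (X i) (Y i) h q ^ (m + 2)

/-- Second component of the gradient `F = ∇f`. -/
noncomputable def F2 {N : ℕ} (X Y : Fin N → ℝ) (m h : ℝ) (q : ℝ × ℝ) : ℝ :=
  -m * ∑ i, (q.2 - Y i) / distPt (X i) (Y i) h q ^ (m + 2)

/-- Entry `a` (the `∂²f/∂x²` entry) of the Hessian matrix of `f(·,h)`. -/
noncomputable def hessA {N : ℕ} (X Y : Fin N → ℝ) (m h : ℝ) (p : ℝ × ℝ) : ℝ :=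
  -m * ∑ i, (1 / distPt (X i) (Y i) h p ^ (m + 2)) *
    (1 - (m + 2) * (p.1 - X i) ^ 2 / distPt (X i) (Y i) h p ^ 2)

/-- Entry `b` (the mixed `∂²f/∂x∂y` entry) of the Hessian matrix of `f(·,h)`. -/
noncomputable def hessB {N : ℕ} (X Y : Fin N → ℝ) (m h : ℝ) (p : ℝ × ℝ) : ℝ :=
  m * (m + 2) * ∑ i, (p.1 - X i) * (p.2 - Y i) / distPt (X i) (Y i) h p ^ (m + 4)

/-- Entry `c` (the `∂²f/∂y²` entry) of the Hessian matrix of `f(·,h)`. -/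
noncomputable def hessC {N : ℕ} (X Y : Fin N → ℝ) (m h : ℝ) (p : ℝ × ℝ) : ℝ :=
  -m * ∑ i, (1 / distPt (X i) (Y i) h p ^ (m + 2)) *
    (1 - (m + 2) * (p.2 - Y i) ^ 2 / distPt (X i) (Y i) h p ^ 2)


set_option maxHeartbeats 1000000 in
/-- for every compact `K ⊆ ℝ²` there is `h₀ > 0` such that for all
`h > h₀` and all `p ∈ K` the Hessian matrix `[[a,b],[b,c]]` of `f(·,h)` at `p` is
negative definite (i.e. its negation is positive definite). -/
theorem hessian_negative_definite_for_large_height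
    (n : ℕ) (X Y : Fin (n + 1) → ℝ) (m : ℝ) (hm : 3 < m ∧ m < 4)
    (K : Set (ℝ × ℝ)) (hK : IsCompact K) :
    ∃ h₀ > (0 : ℝ), ∀ h > h₀, ∀ p ∈ K,
      (-(!![hessA X Y m h p, hessB X Y m h p;
            hessB X Y m h p, hessC X Y m h p])).PosDef := by
  obtain ⟨hm3, _⟩ := hm
  have hm0 : 0 < m := by linarith
  have hm2 : 0 < m + 2 := by linarith
  obtain ⟨B₀, hB₀⟩ := hK.isBounded.exists_norm_le
  set B : ℝ := max B₀ 0 with hBdef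
  have hB : ∀ p ∈ K, ‖p‖ ≤ B := fun p hp => le_trans (hB₀ p hp) (le_max_left _ _)
  have hB0 : 0 ≤ B := le_max_right _ _
  set Mx : ℝ := Finset.univ.sup' ⟨0, Finset.mem_univ 0⟩
      (fun i : Fin (n + 1) => (X i) ^ 2 + (Y i) ^ 2) with hMxdef
  have hMx0 : 0 ≤ Mx := le_trans (by positivity) (Finset.le_sup' _ (Finset.mem_univ 0))
  set C : ℝ := 4 * B ^ 2 + 2 * Mx with hCdef
  have hC0 : 0 ≤ C := by positivity
  refine ⟨Real.sqrt ((m + 2) * C) + 1, by positivity, ?_⟩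
  intro h hh p hp
  have hsnn : 0 ≤ Real.sqrt ((m + 2) * C) := Real.sqrt_nonneg _
  have hh0 : 0 < h := by linarith
  have hhsq : (m + 2) * C < h ^ 2 := by
    have h1 : Real.sqrt ((m + 2) * C) < h := by linarith
    calc (m + 2) * C = Real.sqrt ((m + 2) * C) ^ 2 := (Real.sq_sqrt (by positivity)).symm
    _ < h ^ 2 := by nlinarith
  have hd : ∀ i : Fin (n + 1), 0 < distPt (X i) (Y i) h p := by
    intro i; apply Real.sqrt_pos.mpr; positivity
  have hdsq : ∀ i : Fin (n + 1),
      (distPt (X i) (Y i) h p) ^ 2 = (p.1 - X i) ^ 2 + (p.2 - Y i) ^ 2 + h ^ 2 := by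
    intro i; rw [distPt, Real.sq_sqrt]; positivity
  have hbound : ∀ i : Fin (n + 1), (p.1 - X i) ^ 2 + (p.2 - Y i) ^ 2 ≤ C := by
    intro i
    have h1 : |p.1| ≤ B := le_trans (norm_fst_le p) (hB p hp)
    have h2 : |p.2| ≤ B := le_trans (norm_snd_le p) (hB p hp)
    have h3 : (X i) ^ 2 + (Y i) ^ 2 ≤ Mx :=
      Finset.le_sup' (fun j : Fin (n+1) => (X j) ^ 2 + (Y j) ^ 2) (Finset.mem_univ i)
    nlinarith [sq_abs p.1, sq_abs p.2, abs_nonneg p.1, abs_nonneg p.2,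
      sq_nonneg (p.1 + X i), sq_nonneg (p.2 + Y i)]
  rw [Matrix.posDef_iff_dotProduct_mulVec]
  constructor
  · apply Matrix.IsHermitian.neg
    ext i j
    fin_cases i <;> fin_cases j <;> simp [Matrix.conjTranspose_apply]
  · intro v hv
    set u := v 0 with hu
    set w := v 1 with hw
    have huv : 0 < u ^ 2 + w ^ 2 := by
      have hne : u ≠ 0 ∨ w ≠ 0 := by
        by_contra hcon
        push_neg at hcon
        exact hv (funext fun i => by fin_cases i <;> simp [hu ▸ hcon.1, hw ▸ hcon.2])
      rcases hne with h' | h'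
      · have h1 : 0 < u ^ 2 := by rw [sq]; exact mul_self_pos.mpr h'
        linarith [sq_nonneg w]
      · have h1 : 0 < w ^ 2 := by rw [sq]; exact mul_self_pos.mpr h'
        linarith [sq_nonneg u]
    have hQF : dotProduct (star v)
        ((-(!![hessA X Y m h p, hessB X Y m h p;
              hessB X Y m h p, hessC X Y m h p])).mulVec v) =
        -(hessA X Y m h p * u ^ 2) - 2 * hessB X Y m h p * u * w
          - hessC X Y m h p * w ^ 2 := by
      simp [Matrix.mulVec, dotProduct, Fin.sum_univ_two,
        Matrix.vecHead, Matrix.vecTail, ← hu, ← hw]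
      ring
    rw [hQF]
    have expand : -(hessA X Y m h p * u ^ 2) - 2 * hessB X Y m h p * u * w
          - hessC X Y m h p * w ^ 2 =
        m * ∑ i, (((u ^ 2 + w ^ 2) -
            (m + 2) * (u * (p.1 - X i) + w * (p.2 - Y i)) ^ 2 /
              (distPt (X i) (Y i) h p) ^ 2) / distPt (X i) (Y i) h p ^ (m + 2)) := by
      calc -(hessA X Y m h p * u ^ 2) - 2 * hessB X Y m h p * u * w
          - hessC X Y m h p * w ^ 2
          = (m * u ^ 2) * (∑ i, (1 / distPt (X i) (Y i) h p ^ (m + 2)) *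
              (1 - (m + 2) * (p.1 - X i) ^ 2 / distPt (X i) (Y i) h p ^ 2))
            - (2 * m * (m + 2) * u * w) * (∑ i, (p.1 - X i) * (p.2 - Y i) /
                distPt (X i) (Y i) h p ^ (m + 4))
            + (m * w ^ 2) * (∑ i, (1 / distPt (X i) (Y i) h p ^ (m + 2)) *
              (1 - (m + 2) * (p.2 - Y i) ^ 2 / distPt (X i) (Y i) h p ^ 2)) := by
            rw [hessA, hessB, hessC]; ring
        _ = ∑ i, ((m * u ^ 2) * ((1 / distPt (X i) (Y i) h p ^ (m + 2)) *
              (1 - (m + 2) * (p.1 - X i) ^ 2 / distPt (X i) (Y i) h p ^ 2))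
            - (2 * m * (m + 2) * u * w) * ((p.1 - X i) * (p.2 - Y i) /
                distPt (X i) (Y i) h p ^ (m + 4))
            + (m * w ^ 2) * ((1 / distPt (X i) (Y i) h p ^ (m + 2)) *
              (1 - (m + 2) * (p.2 - Y i) ^ 2 / distPt (X i) (Y i) h p ^ 2))) := by
            rw [Finset.mul_sum, Finset.mul_sum, Finset.mul_sum,
              ← Finset.sum_sub_distrib, ← Finset.sum_add_distrib]
        _ = m * ∑ i, (((u ^ 2 + w ^ 2) -
            (m + 2) * (u * (p.1 - X i) + w * (p.2 - Y i)) ^ 2 /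
              (distPt (X i) (Y i) h p) ^ 2) / distPt (X i) (Y i) h p ^ (m + 2)) := ?_
      rw [Finset.mul_sum]
      apply Finset.sum_congr rfl
      intro i _
      have hdi := hd i
      have hD : (0:ℝ) < distPt (X i) (Y i) h p ^ (m + 2) := Real.rpow_pos_of_pos hdi _
      have hE : distPt (X i) (Y i) h p ^ (m + 4) =
          distPt (X i) (Y i) h p ^ (m + 2) * distPt (X i) (Y i) h p ^ 2 := by
        rw [show ((distPt (X i) (Y i) h p) ^ (2:ℕ) : ℝ) =
            distPt (X i) (Y i) h p ^ ((2:ℕ):ℝ) from (Real.rpow_natCast _ 2).symm,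
          ← Real.rpow_add hdi]
        ring_nf
      have hDne : distPt (X i) (Y i) h p ^ (m + 2) ≠ 0 := ne_of_gt hD
      have hd2ne : (distPt (X i) (Y i) h p) ^ 2 ≠ 0 := pow_ne_zero 2 (ne_of_gt hdi)
      rw [hE]
      field_simp
      ring
    rw [expand]
    apply mul_pos hm0
    apply Finset.sum_pos _ ⟨0, Finset.mem_univ 0⟩
    intro i _
    apply div_pos _ (Real.rpow_pos_of_pos (hd i) _)
    have hcs : (u * (p.1 - X i) + w * (p.2 - Y i)) ^ 2 ≤ (u ^ 2 + w ^ 2) * C := by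
      nlinarith [sq_nonneg (u * (p.2 - Y i) - w * (p.1 - X i)), hbound i, huv,
        sq_nonneg (p.1 - X i), sq_nonneg (p.2 - Y i)]
    have hd2 : (m + 2) * C < (distPt (X i) (Y i) h p) ^ 2 := by
      rw [hdsq i]
      nlinarith [sq_nonneg (p.1 - X i), sq_nonneg (p.2 - Y i)]
    have hd2pos : (0:ℝ) < (distPt (X i) (Y i) h p) ^ 2 := pow_pos (hd i) 2
    rw [sub_pos, div_lt_iff₀ hd2pos]
    nlinarith [mul_le_mul_of_nonneg_left hcs (le_of_lt hm2),
      mul_lt_mul_of_pos_left hd2 huv]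
end

section
/- Let p = (x,y) ∈ ℝ². If ((x − x_i)² + (y − y_i)²)/d_i(p)² < 2/(m+2) holds for every i = 1,…,n, then a + c < 0, where a = −m Σ_{i=1}^n d_i(p)^{−(m+2)} (1 − (m+2)(x − x_i)²/d_i(p)²) and c = −m Σ_{i=1}^n d_i(p)^{−(m+2)} (1 − (m+2)(y − y_i)²/d_i(p)²) are the diagonal entries of the Hessian matrix of f at p. -/
open Real Finset

/-- if `((x-x_i)² + (y-y_i)²)/d_i² < 2/(m+2)` for every `i`, then the
trace `a + c` of the Hessian of `f` at `p` is negative. -/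
theorem hessian_trace_negative
    (n : ℕ) (X Y : Fin (n + 1) → ℝ) (h m : ℝ) (hh : 0 < h) (hm : 3 < m ∧ m < 4)
    (p : ℝ × ℝ)
    (hsmall : ∀ i, ((p.1 - X i) ^ 2 + (p.2 - Y i) ^ 2) / distPt (X i) (Y i) h p ^ 2
      < 2 / (m + 2)) :
    hessA X Y m h p + hessC X Y m h p < 0 := by
  have hm0 : 0 < m := by linarith [hm.1]
  unfold hessA hessC
  rw [← mul_add, ← Finset.sum_add_distrib]
  have hsum : 0 < ∑ i, ((1 / distPt (X i) (Y i) h p ^ (m + 2)) *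
      (1 - (m + 2) * (p.1 - X i) ^ 2 / distPt (X i) (Y i) h p ^ 2) +
      (1 / distPt (X i) (Y i) h p ^ (m + 2)) *
      (1 - (m + 2) * (p.2 - Y i) ^ 2 / distPt (X i) (Y i) h p ^ 2)) := by
    apply Finset.sum_pos _ Finset.univ_nonempty
    intro i _
    have hd : 0 < distPt (X i) (Y i) h p := by
      have : 0 < (p.1 - X i) ^ 2 + (p.2 - Y i) ^ 2 + h ^ 2 := by positivity
      exact Real.sqrt_pos.mpr this
    have hD : 0 < distPt (X i) (Y i) h p ^ (m + 2) := Real.rpow_pos_of_pos hd _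
    have hd2 : 0 < distPt (X i) (Y i) h p ^ 2 := by positivity
    have hkey := hsmall i
    have h2 : (m + 2) * (((p.1 - X i) ^ 2 + (p.2 - Y i) ^ 2) / distPt (X i) (Y i) h p ^ 2) < 2 := by
      have hm2 : 0 < m + 2 := by linarith
      rw [div_lt_div_iff₀ (by positivity) hm2] at hkey
      rw [mul_div_assoc', div_lt_iff₀ hd2]
      nlinarith [hkey]
    have hterm : 0 < (1 - (m + 2) * (p.1 - X i) ^ 2 / distPt (X i) (Y i) h p ^ 2) +
        (1 - (m + 2) * (p.2 - Y i) ^ 2 / distPt (X i) (Y i) h p ^ 2) := by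
      have : (m + 2) * (p.1 - X i) ^ 2 / distPt (X i) (Y i) h p ^ 2 +
          (m + 2) * (p.2 - Y i) ^ 2 / distPt (X i) (Y i) h p ^ 2 =
          (m + 2) * (((p.1 - X i) ^ 2 + (p.2 - Y i) ^ 2) / distPt (X i) (Y i) h p ^ 2) := by
        field_simp
      linarith [h2, this.ge, this.le]
    calc (0:ℝ) < (1 / distPt (X i) (Y i) h p ^ (m + 2)) *
        ((1 - (m + 2) * (p.1 - X i) ^ 2 / distPt (X i) (Y i) h p ^ 2) +
         (1 - (m + 2) * (p.2 - Y i) ^ 2 / distPt (X i) (Y i) h p ^ 2)) := by positivity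
      _ = _ := by ring
  nlinarith [hsum]
end

section
/- Let p = (x,y) ∈ ℝ². If ((x − x_i)² + (y − y_i)²)/d_i(p)² < 1/(m+2) holds for every i = 1,…,n, then a·c − b² > 0, where a = −m Σ_{i=1}^n d_i(p)^{−(m+2)} (1 − (m+2)(x − x_i)²/d_i(p)²), b = m(m+2) Σ_{i=1}^n (x − x_i)(y − y_i)/d_i(p)^{m+4}, and c = −m Σ_{i=1}^n d_i(p)^{−(m+2)} (1 − (m+2)(y − y_i)²/d_i(p)²) are the entries of the Hessian matrix of f at p. -/
open Real Finset

/-- if `((x-x_i)² + (y-y_i)²)/d_i² < 1/(m+2)` for every `i`, then the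
determinant `a·c - b²` of the Hessian of `f` at `p` is positive. -/
theorem hessian_determinant_positive
    (n : ℕ) (X Y : Fin (n + 1) → ℝ) (h m : ℝ) (hh : 0 < h) (hm : 3 < m ∧ m < 4)
    (p : ℝ × ℝ)
    (hsmall : ∀ i, ((p.1 - X i) ^ 2 + (p.2 - Y i) ^ 2) / distPt (X i) (Y i) h p ^ 2
      < 1 / (m + 2)) :
    0 < hessA X Y m h p * hessC X Y m h p - hessB X Y m h p ^ 2 := by
  obtain ⟨hm3, hm4⟩ := hm
  have hm0 : 0 < m := by linarith
  have hm2 : 0 < m + 2 := by linarith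
  set d : Fin (n+1) → ℝ := fun i => distPt (X i) (Y i) h p with hd_def
  set u : Fin (n+1) → ℝ := fun i => p.1 - X i with hu_def
  set v : Fin (n+1) → ℝ := fun i => p.2 - Y i with hv_def
  have hd : ∀ i, 0 < d i := by
    intro i
    apply Real.sqrt_pos.mpr
    positivity
  have hd2 : ∀ i, d i ^ 2 = u i ^ 2 + v i ^ 2 + h ^ 2 := by
    intro i
    simp only [hd_def, distPt]
    rw [sq_sqrt (by positivity)]
  -- key: (m+2)*(u²+v²)/d² < 1
  have hkey : ∀ i, (m + 2) * ((u i ^ 2 + v i ^ 2) / d i ^ 2) < 1 := by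
    intro i
    have := hsmall i
    rw [lt_div_iff₀ hm2] at this
    linarith [this]
  set A : Fin (n+1) → ℝ := fun i =>
    (1 / d i ^ (m + 2)) * (1 - (m + 2) * u i ^ 2 / d i ^ 2) with hA_def
  set C : Fin (n+1) → ℝ := fun i =>
    (1 / d i ^ (m + 2)) * (1 - (m + 2) * v i ^ 2 / d i ^ 2) with hC_def
  set B : Fin (n+1) → ℝ := fun i => (m + 2) * (u i * v i / d i ^ (m + 4)) with hB_def
  have hD : ∀ i, 0 < d i ^ (m + 2) := fun i => Real.rpow_pos_of_pos (hd i) _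
  have hApos : ∀ i, 0 < A i := by
    intro i
    apply mul_pos (one_div_pos.mpr (hD i))
    have h1 : (m + 2) * u i ^ 2 / d i ^ 2 ≤ (m + 2) * ((u i ^ 2 + v i ^ 2) / d i ^ 2) := by
      rw [mul_div_assoc]
      apply mul_le_mul_of_nonneg_left _ (le_of_lt hm2)
      apply div_le_div_of_nonneg_right _ (pow_pos (hd i) 2).le
      nlinarith [sq_nonneg (v i)]
    linarith [hkey i]
  have hCpos : ∀ i, 0 < C i := by
    intro i
    apply mul_pos (one_div_pos.mpr (hD i))
    have h1 : (m + 2) * v i ^ 2 / d i ^ 2 ≤ (m + 2) * ((u i ^ 2 + v i ^ 2) / d i ^ 2) := by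
      rw [mul_div_assoc]
      apply mul_le_mul_of_nonneg_left _ (le_of_lt hm2)
      apply div_le_div_of_nonneg_right _ (pow_pos (hd i) 2).le
      nlinarith [sq_nonneg (u i)]
    linarith [hkey i]
  have hrpow : ∀ i, d i ^ (m + 4) = d i ^ (m + 2) * d i ^ 2 := by
    intro i
    rw [show (m + 4 : ℝ) = (m + 2) + 2 by ring, Real.rpow_add (hd i)]
    norm_num [Real.rpow_two]
  have hBAC : ∀ i, B i ^ 2 < A i * C i := by
    intro i
    have hcalc : A i * C i - B i ^ 2
        = (1 / d i ^ (m + 2)) ^ 2 * (1 - (m + 2) * ((u i ^ 2 + v i ^ 2) / d i ^ 2)) := by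
      simp only [hA_def, hC_def, hB_def, hrpow i]
      have h1 : d i ^ (m + 2) ≠ 0 := ne_of_gt (hD i)
      have h2 : d i ^ 2 ≠ 0 := pow_ne_zero 2 (ne_of_gt (hd i))
      field_simp
      ring
    have hpos : 0 < (1 / d i ^ (m + 2)) ^ 2 * (1 - (m + 2) * ((u i ^ 2 + v i ^ 2) / d i ^ 2)) :=
      mul_pos (pow_pos (one_div_pos.mpr (hD i)) 2) (by linarith [hkey i])
    linarith [hcalc, hpos]
  -- rewrite goal
  have ha : hessA X Y m h p = -m * ∑ i, A i := rfl
  have hc : hessC X Y m h p = -m * ∑ i, C i := rfl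
  have hb : hessB X Y m h p = m * ∑ i, B i := by
    simp only [hessB, hB_def, ← hu_def, ← hv_def, ← hd_def, mul_sum]
    apply Finset.sum_congr rfl
    intro i _
    ring
  rw [ha, hc, hb]
  have hgoal : (∑ i, B i) ^ 2 < (∑ i, A i) * (∑ i, C i) := by
    have h1 : (∑ i, B i) ^ 2 ≤ (∑ i, |B i|) ^ 2 := by
      have := Finset.abs_sum_le_sum_abs B Finset.univ
      have h0 : (0:ℝ) ≤ ∑ i, |B i| := Finset.sum_nonneg fun i _ => abs_nonneg _
      calc (∑ i, B i) ^ 2 = |∑ i, B i| ^ 2 := (sq_abs _).symm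
        _ ≤ (∑ i, |B i|) ^ 2 := by nlinarith [abs_nonneg (∑ i, B i)]
    have h2 : (∑ i, |B i|) < ∑ i, Real.sqrt (A i) * Real.sqrt (C i) := by
      apply Finset.sum_lt_sum_of_nonempty Finset.univ_nonempty
      intro i _
      have hAC : |B i| < Real.sqrt (A i * C i) := by
        rw [show |B i| = Real.sqrt (B i ^ 2) by rw [Real.sqrt_sq_eq_abs]]
        exact Real.sqrt_lt_sqrt (sq_nonneg _) (hBAC i)
      rwa [Real.sqrt_mul (le_of_lt (hApos i))] at hAC
    have h3 : (∑ i, Real.sqrt (A i) * Real.sqrt (C i)) ^ 2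
        ≤ (∑ i, Real.sqrt (A i) ^ 2) * (∑ i, Real.sqrt (C i) ^ 2) :=
      Finset.sum_mul_sq_le_sq_mul_sq _ _ _
    have h4 : (∑ i, Real.sqrt (A i) ^ 2) = ∑ i, A i :=
      Finset.sum_congr rfl fun i _ => Real.sq_sqrt (le_of_lt (hApos i))
    have h5 : (∑ i, Real.sqrt (C i) ^ 2) = ∑ i, C i :=
      Finset.sum_congr rfl fun i _ => Real.sq_sqrt (le_of_lt (hCpos i))
    have hsnn : 0 ≤ ∑ i, Real.sqrt (A i) * Real.sqrt (C i) :=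
      Finset.sum_nonneg fun i _ => mul_nonneg (Real.sqrt_nonneg _) (Real.sqrt_nonneg _)
    have habs : 0 ≤ ∑ i, |B i| := Finset.sum_nonneg fun i _ => abs_nonneg _
    calc (∑ i, B i) ^ 2 ≤ (∑ i, |B i|) ^ 2 := h1
      _ < (∑ i, Real.sqrt (A i) * Real.sqrt (C i)) ^ 2 := by nlinarith
      _ ≤ (∑ i, A i) * (∑ i, C i) := by rw [← h4, ← h5]; exact h3
  have hfin : 0 < m * m * ((∑ i, A i) * (∑ i, C i) - (∑ i, B i) ^ 2) :=
    mul_pos (mul_pos hm0 hm0) (by linarith [hgoal])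
  nlinarith [hfin]
end

section
/- There exists h₀ > 0 such that for every h > h₀ the function f(·,h) is strictly concave on the rectangle R = [min_i x_i, max_i x_i] × [min_i y_i, max_i y_i]; that is, for any distinct p, q ∈ R and any t ∈ (0,1), f(t·p + (1−t)·q, h) > t·f(p,h) + (1−t)·f(q,h). -/
open Real Finset

/-- Membership in the rectangle `R = [min_i x_i, max_i x_i] × [min_i y_i, max_i y_i]`. -/
noncomputable def inRect {N : ℕ} (X Y : Fin (N + 1) → ℝ) (p : ℝ × ℝ) : Prop :=
  Finset.univ.inf' Finset.univ_nonempty X ≤ p.1 ∧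
  p.1 ≤ Finset.univ.sup' Finset.univ_nonempty X ∧
  Finset.univ.inf' Finset.univ_nonempty Y ≤ p.2 ∧
  p.2 ≤ Finset.univ.sup' Finset.univ_nonempty Y



open Real Finset

noncomputable def auxS (c1 c2 a b h t : ℝ) : ℝ := (c1 + t*a)^2 + (c2 + t*b)^2 + h^2
noncomputable def auxS' (c1 c2 a b t : ℝ) : ℝ := (2*(c1 + t*a))*a + (2*(c2 + t*b))*b
noncomputable def auxP (c1 c2 a b h m t : ℝ) : ℝ := auxS c1 c2 a b h t ^ (-(m/2))
noncomputable def auxP' (c1 c2 a b h m t : ℝ) : ℝ :=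
  auxS' c1 c2 a b t * (-(m/2)) * auxS c1 c2 a b h t ^ (-(m/2) - 1)
noncomputable def auxP'' (c1 c2 a b h m t : ℝ) : ℝ :=
  (2*a^2 + 2*b^2) * (-(m/2)) * auxS c1 c2 a b h t ^ (-(m/2) - 1)
  + auxS' c1 c2 a b t * (-(m/2)) *
      (auxS' c1 c2 a b t * (-(m/2) - 1) * auxS c1 c2 a b h t ^ (-(m/2) - 1 - 1))

lemma auxS_pos (c1 c2 a b h t : ℝ) (hh : 0 < h) : 0 < auxS c1 c2 a b h t := by
  unfold auxS; positivity

lemma hasDerivAt_auxS (c1 c2 a b h t : ℝ) :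
    HasDerivAt (fun t => auxS c1 c2 a b h t) (auxS' c1 c2 a b t) t := by
  unfold auxS auxS'
  have h1 : HasDerivAt (fun t : ℝ => c1 + t*a) a t := by
    simpa using ((hasDerivAt_id t).mul_const a).const_add c1
  have h2 : HasDerivAt (fun t : ℝ => c2 + t*b) b t := by
    simpa using ((hasDerivAt_id t).mul_const b).const_add c2
  have := ((h1.fun_pow 2).fun_add (h2.fun_pow 2)).add_const (h^2)
  exact this.congr_deriv (by norm_num [pow_one])

lemma hasDerivAt_auxS' (c1 c2 a b t : ℝ) :
    HasDerivAt (fun t => auxS' c1 c2 a b t) (2*a^2 + 2*b^2) t := by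
  unfold auxS'
  have h1 : HasDerivAt (fun t : ℝ => (2*(c1 + t*a))*a) (2*a^2) t := by
    have : HasDerivAt (fun t : ℝ => 2*(c1 + t*a)) (2*a) t := by
      simpa using (((hasDerivAt_id t).mul_const a).const_add c1).const_mul 2
    simpa [mul_assoc, sq] using this.mul_const a
  have h2 : HasDerivAt (fun t : ℝ => (2*(c2 + t*b))*b) (2*b^2) t := by
    have : HasDerivAt (fun t : ℝ => 2*(c2 + t*b)) (2*b) t := by
      simpa using (((hasDerivAt_id t).mul_const b).const_add c2).const_mul 2
    simpa [mul_assoc, sq] using this.mul_const b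
  exact h1.add h2

lemma hasDerivAt_auxP (c1 c2 a b h m t : ℝ) (hh : 0 < h) :
    HasDerivAt (fun t => auxP c1 c2 a b h m t) (auxP' c1 c2 a b h m t) t := by
  exact (hasDerivAt_auxS c1 c2 a b h t).rpow_const
    (Or.inl (auxS_pos c1 c2 a b h t hh).ne')

lemma hasDerivAt_auxP' (c1 c2 a b h m t : ℝ) (hh : 0 < h) :
    HasDerivAt (fun t => auxP' c1 c2 a b h m t) (auxP'' c1 c2 a b h m t) t := by
  have h1 : HasDerivAt (fun t => auxS' c1 c2 a b t * (-(m/2))) ((2*a^2+2*b^2) * (-(m/2))) t :=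
    (hasDerivAt_auxS' c1 c2 a b t).mul_const _
  have h2 : HasDerivAt (fun t => auxS c1 c2 a b h t ^ (-(m/2) - 1))
      (auxS' c1 c2 a b t * (-(m/2) - 1) * auxS c1 c2 a b h t ^ (-(m/2) - 1 - 1)) t :=
    (hasDerivAt_auxS c1 c2 a b h t).rpow_const (Or.inl (auxS_pos c1 c2 a b h t hh).ne')
  exact h1.mul h2

lemma auxP''_neg (c1 c2 a b h m t : ℝ) (hh : 0 < h) (hm : 0 < m) (hab : 0 < a^2 + b^2)
    (hbound : (m+2) * ((c1 + t*a)^2 + (c2 + t*b)^2) < h^2) :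
    auxP'' c1 c2 a b h m t < 0 := by
  have hspos := auxS_pos c1 c2 a b h t hh
  have hw : 0 < auxS c1 c2 a b h t ^ (-(m/2) - 1 - 1) := Real.rpow_pos_of_pos hspos _
  have hsplit : auxS c1 c2 a b h t ^ (-(m/2) - 1)
      = auxS c1 c2 a b h t ^ (-(m/2) - 1 - 1) * auxS c1 c2 a b h t := by
    have he : -(m/2) - 1 = (-(m/2) - 1 - 1) + 1 := by ring
    nth_rewrite 1 [he]
    rw [Real.rpow_add_one hspos.ne']
  set s := auxS c1 c2 a b h t with hs
  set s' := auxS' c1 c2 a b t with hs'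
  set w := s ^ (-(m/2) - 1 - 1) with hwdef
  have heq : auxP'' c1 c2 a b h m t
      = (-(m/2)) * w * ((2*a^2 + 2*b^2) * s + (-(m/2) - 1) * s'^2) := by
    unfold auxP''
    rw [← hs, ← hs', hsplit, ← hwdef]
    ring
  have hbr : 0 < (2*a^2 + 2*b^2) * s + (-(m/2) - 1) * s'^2 := by
    have hCS : s'^2 ≤ 4*(a^2+b^2) * ((c1 + t*a)^2 + (c2 + t*b)^2) := by
      rw [hs']; unfold auxS'
      nlinarith [sq_nonneg ((c1+t*a)*b - (c2+t*b)*a)]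
    have hsval : s = (c1 + t*a)^2 + (c2 + t*b)^2 + h^2 := rfl
    nlinarith [sq_nonneg (c1+t*a), sq_nonneg (c2+t*b),
      mul_pos hab (show (0:ℝ) < h^2 - (m+2)*((c1 + t*a)^2 + (c2 + t*b)^2) by linarith),
      mul_nonneg (le_of_lt hab) (add_nonneg (sq_nonneg (c1+t*a)) (sq_nonneg (c2+t*b)))]
  have hneg : (-(m/2)) * w < 0 := mul_neg_of_neg_of_pos (by linarith) hw
  rw [heq]
  exact mul_neg_of_neg_of_pos hneg hbr
set_option maxHeartbeats 1000000 in
/-- there is `h₀ > 0` such that for every `h > h₀` the function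
`f(·,h)` is strictly concave on the rectangle `R`: for distinct `p, q ∈ R` and
`t ∈ (0,1)`, `f(t·p + (1-t)·q, h) > t·f(p,h) + (1-t)·f(q,h)`. -/
theorem strictly_concave_on_rectangle_for_large_height
    (n : ℕ) (X Y : Fin (n + 1) → ℝ) (m : ℝ) (hm : 3 < m ∧ m < 4) :
    ∃ h₀ > (0 : ℝ), ∀ h > h₀,
      ∀ p q : ℝ × ℝ, inRect X Y p → inRect X Y q → p ≠ q →
        ∀ t : ℝ, 0 < t → t < 1 →
          t * fEnergy X Y m h p + (1 - t) * fEnergy X Y m h q <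
            fEnergy X Y m h (t • p + (1 - t) • q) := by
  obtain ⟨hm3, hm4⟩ := hm
  set loX := Finset.univ.inf' Finset.univ_nonempty X with hloX
  set hiX := Finset.univ.sup' Finset.univ_nonempty X with hhiX
  set loY := Finset.univ.inf' Finset.univ_nonempty Y with hloY
  set hiY := Finset.univ.sup' Finset.univ_nonempty Y with hhiY
  set D2 : ℝ := (hiX - loX)^2 + (hiY - loY)^2 with hD2def
  have hD2 : 0 ≤ D2 := by positivity
  refine ⟨Real.sqrt ((m+2) * D2) + 1, by positivity, ?_⟩
  intro h hh p q hp hq hpq t ht ht1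
  have hsqrt : 0 ≤ Real.sqrt ((m+2) * D2) := Real.sqrt_nonneg _
  have hhpos : 0 < h := by linarith
  have hsq : (m+2) * D2 < h^2 := by
    have h1 : Real.sqrt ((m+2) * D2) < h := by linarith
    have h2 : Real.sqrt ((m+2) * D2) ^ 2 < h ^ 2 := by nlinarith
    rwa [Real.sq_sqrt (mul_nonneg (by linarith) hD2)] at h2
  set a := p.1 - q.1 with hadef
  set b := p.2 - q.2 with hbdef
  have hab : 0 < a^2 + b^2 := by
    rw [Ne, Prod.ext_iff, not_and_or] at hpq
    rcases hpq with hne | hne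
    · have ha : a ≠ 0 := sub_ne_zero_of_ne hne
      have : 0 < a^2 := (sq_nonneg a).lt_of_ne (Ne.symm (pow_ne_zero 2 ha))
      nlinarith [sq_nonneg b]
    · have hb : b ≠ 0 := sub_ne_zero_of_ne hne
      have : 0 < b^2 := (sq_nonneg b).lt_of_ne (Ne.symm (pow_ne_zero 2 hb))
      nlinarith [sq_nonneg a]
  set g : ℝ → ℝ := fun s => ∑ i, auxP (q.1 - X i) (q.2 - Y i) a b h m s with hgdef
  set g' : ℝ → ℝ := fun s => ∑ i, auxP' (q.1 - X i) (q.2 - Y i) a b h m s with hg'def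
  set g'' : ℝ → ℝ := fun s => ∑ i, auxP'' (q.1 - X i) (q.2 - Y i) a b h m s with hg''def
  have hgderiv : ∀ s : ℝ, HasDerivAt g (g' s) s := fun s =>
    HasDerivAt.fun_sum fun i _ => hasDerivAt_auxP _ _ a b h m s hhpos
  have hg'deriv : ∀ s : ℝ, HasDerivAt g' (g'' s) s := fun s =>
    HasDerivAt.fun_sum fun i _ => hasDerivAt_auxP' _ _ a b h m s hhpos
  -- equality of g with fEnergy along the segment
  have hgeq : ∀ s : ℝ, g s = fEnergy X Y m h (q.1 + s*a, q.2 + s*b) := by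
    intro s
    rw [hgdef]
    unfold fEnergy
    refine Finset.sum_congr rfl fun i _ => ?_
    unfold distPt auxP auxS
    have hVpos : 0 < (q.1 - X i + s*a)^2 + (q.2 - Y i + s*b)^2 + h^2 := by positivity
    have hV : ((q.1 + s*a : ℝ) - X i)^2 + ((q.2 + s*b : ℝ) - Y i)^2 + h^2
        = (q.1 - X i + s*a)^2 + (q.2 - Y i + s*b)^2 + h^2 := by ring
    simp only [hV]
    rw [Real.sqrt_eq_rpow, ← Real.rpow_mul hVpos.le]
    congr 1
    ring
  -- strict concavity of g on [0,1]
  have hconc : StrictConcaveOn ℝ (Set.Icc (0:ℝ) 1) g := by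
    apply strictConcaveOn_of_deriv2_neg (convex_Icc 0 1)
    · exact (continuous_iff_continuousAt.2 fun s =>
        (hgderiv s).differentiableAt.continuousAt).continuousOn
    · intro x hx
      rw [interior_Icc] at hx
      have hd1 : deriv g = g' := funext fun s => (hgderiv s).deriv
      have hit : deriv^[2] g x = deriv (deriv g) x := rfl
      rw [hit, hd1, (hg'deriv x).deriv]
      have hterm : ∀ i : Fin (n+1), auxP'' (q.1 - X i) (q.2 - Y i) a b h m x < 0 := by
        intro i
        apply auxP''_neg _ _ _ _ _ _ _ hhpos (by linarith) hab
        -- bound : (m+2) * (|L x − xᵢ|²) < h²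
        have hx1 : loX ≤ q.1 + x*a ∧ q.1 + x*a ≤ hiX := by
          obtain ⟨hp1, hp2, _, _⟩ := hp
          obtain ⟨hq1, hq2, _, _⟩ := hq
          constructor <;> nlinarith [hx.1, hx.2]
        have hx2 : loY ≤ q.2 + x*b ∧ q.2 + x*b ≤ hiY := by
          obtain ⟨_, _, hp3, hp4⟩ := hp
          obtain ⟨_, _, hq3, hq4⟩ := hq
          constructor <;> nlinarith [hx.1, hx.2]
        have hXi1 : loX ≤ X i := Finset.inf'_le _ (Finset.mem_univ i)
        have hXi2 : X i ≤ hiX := Finset.le_sup' _ (Finset.mem_univ i)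
        have hYi1 : loY ≤ Y i := Finset.inf'_le _ (Finset.mem_univ i)
        have hYi2 : Y i ≤ hiY := Finset.le_sup' _ (Finset.mem_univ i)
        have hb1 : (q.1 - X i + x*a)^2 ≤ (hiX - loX)^2 :=
          sq_le_sq' (by linarith) (by linarith)
        have hb2 : (q.2 - Y i + x*b)^2 ≤ (hiY - loY)^2 :=
          sq_le_sq' (by linarith) (by linarith)
        nlinarith
      calc g'' x = ∑ i, auxP'' (q.1 - X i) (q.2 - Y i) a b h m x := rfl
        _ < ∑ _i : Fin (n+1), (0:ℝ) :=
            Finset.sum_lt_sum_of_nonempty Finset.univ_nonempty fun i _ => hterm i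
        _ = 0 := by simp
  -- apply strict concavity at the endpoints 1 and 0
  have key := hconc.2 (Set.mem_Icc.2 ⟨zero_le_one, le_refl 1⟩)
      (Set.mem_Icc.2 ⟨le_refl 0, zero_le_one⟩) one_ne_zero ht
      (by linarith : (0:ℝ) < 1 - t) (by ring)
  have e1 : g 1 = fEnergy X Y m h p := by
    rw [hgeq 1]
    congr 1
    ext <;> simp [hadef, hbdef]
  have e0 : g 0 = fEnergy X Y m h q := by
    rw [hgeq 0]
    congr 1
    ext <;> simp
  have et : g (t • (1:ℝ) + (1 - t) • (0:ℝ)) = fEnergy X Y m h (t • p + (1 - t) • q) := by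
    have harg : t • (1:ℝ) + (1 - t) • (0:ℝ) = t := by simp
    rw [harg, hgeq t]
    congr 1
    have : t • p + (1 - t) • q = (t*p.1 + (1-t)*q.1, t*p.2 + (1-t)*q.2) := by
      simp [Prod.ext_iff, Prod.smul_fst, Prod.smul_snd, smul_eq_mul]
    rw [this]
    ext <;> simp [hadef, hbdef] <;> ring
  rw [smul_eq_mul, smul_eq_mul, e1, e0, et] at key
  exact key
end
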